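/- Let m < n be positive integers and 0 < c < r_{m,n} := n/(m^{m/n}(n-m)^{(n-m)/n}). Then g(x) = 1 - c x^m + x^n has no positive real root. -/

import Mathlib

theorem no_positive_root_of_c_lt_r (m n : ℕ) (hm : 0 < m) (hmn : m < n) (c : ℝ)
    (hc0 : 0 < c)
    (hc : c < (n : ℝ) / ((m : ℝ) ^ ((m : ℝ) / (n : ℝ)) *
      ((n : ℝ) - (m : ℝ)) ^ (((n : ℝ) - (m : ℝ)) / (n : ℝ)))) :
    ¬ ∃ ζ : ℝ, 0 < ζ ∧ 1 - c * ζ ^ m + ζ ^ n = 0 := by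
  rintro ⟨ζ, hζ, hroot⟩
  set N : ℝ := (n : ℝ) with hNdef
  set M : ℝ := (m : ℝ) with hMdef
  have hM : (0:ℝ) < M := by rw [hMdef]; exact_mod_cast hm
  have hN : (0:ℝ) < N := by rw [hNdef]; exact_mod_cast hm.trans hmn
  have hK : (0:ℝ) < N - M := by
    have : M < N := by rw [hMdef, hNdef]; exact_mod_cast hmn
    linarith
  set K : ℝ := N - M with hKdef
  have hw : K / N + M / N = 1 := by field_simp [hKdef]; linarith
  -- weighted AM-GM
  have hp1 : (0:ℝ) ≤ N / K := le_of_lt (div_pos hN hK)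
  have hp2 : (0:ℝ) ≤ N * ζ ^ n / M := by positivity
  have amgm := Real.geom_mean_le_arith_mean2_weighted
    (le_of_lt (div_pos hK hN)) (le_of_lt (div_pos hM hN)) hp1 hp2 hw
  have hRHS : K / N * (N / K) + M / N * (N * ζ ^ n / M) = 1 + ζ ^ n := by
    field_simp
  -- compute the geometric mean
  have hζn : (ζ ^ n : ℝ) = ζ ^ (N : ℝ) := (Real.rpow_natCast ζ n).symm
  have hζm : (ζ ^ m : ℝ) = ζ ^ (M : ℝ) := (Real.rpow_natCast ζ m).symm
  have hpow2 : (N * ζ ^ n / M) ^ (M / N) = (N / M) ^ (M / N) * ζ ^ m := by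
    have h1 : N * ζ ^ n / M = (N / M) * ζ ^ n := by ring
    rw [h1, Real.mul_rpow (le_of_lt (div_pos hN hM)) (by positivity), hζn,
      ← Real.rpow_mul hζ.le]
    have h2 : N * (M / N) = M := by field_simp
    rw [h2, ← hζm]
  have hLHS : (N / K) ^ (K / N) * (N * ζ ^ n / M) ^ (M / N)
      = N / (M ^ (M / N) * K ^ (K / N)) * ζ ^ m := by
    rw [hpow2, Real.div_rpow hN.le hK.le, Real.div_rpow hN.le hM.le]
    have hNN : N ^ (K / N) * N ^ (M / N) = N := by
      rw [← Real.rpow_add hN, hw, Real.rpow_one]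
    have hK' : (0:ℝ) < K ^ (K / N) := Real.rpow_pos_of_pos hK _
    have hM' : (0:ℝ) < M ^ (M / N) := Real.rpow_pos_of_pos hM _
    field_simp
    linear_combination hNN
  rw [hRHS, hLHS] at amgm
  have hrc : c * ζ ^ m = 1 + ζ ^ n := by linarith
  have hζmpos : (0:ℝ) < ζ ^ m := pow_pos hζ m
  nlinarith [mul_lt_mul_of_pos_right hc hζmpos]
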